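/- Let k be a field and A a commutative k-algebra which is an integral domain, equipped with an ℕ-grading A = ⊕_{n∈ℕ} A_n by k-submodules satisfying A_n·A_m ⊆ A_{n+m} and A_0 = k·1. Let ℤ^N carry a translation-invariant linear order and let Ψ be a valuation on A with values in ℤ^N. Let b₁, …, b_r ∈ A be nonzero homogeneous elements of degrees d₁, …, d_r ≥ 1 such that the vectors Ψ(b₁), …, Ψ(b_r) are linearly independent in ℚ^N. Let B be the k-subalgebra of A generated by b₁, …, b_r and set B_n := B ∩ A_n. Then the Newton–Okounkov body Δ(B), defined as the closure in ℝ^N of the convex hull of ⋃_{n≥1} { (1/n)·Ψ(f) : f ∈ B_n, f ≠ 0 }, equals the convex hull of the finite set { (1/d_i)·Ψ(b_i) : 1 ≤ i ≤ r }. In particular Δ(B) is a rational polytope. -/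

import Mathlib

private lemma stmt7_exists_max {γ σ : Type*} (le : γ → γ → Prop)
    (hrefl : ∀ a, le a a)
    (htrans : ∀ a b c, le a b → le b c → le a c)
    (htotal : ∀ a b, le a b ∨ le b a)
    (v : σ → γ) : ∀ (s : Finset σ), s.Nonempty → ∃ m ∈ s, ∀ x ∈ s, le (v x) (v m) := by
  classical
  intro s
  induction s using Finset.induction_on with
  | empty => intro h; exact absurd h (by simp)
  | @insert a s ha ih =>
    intro _
    rcases s.eq_empty_or_nonempty with rfl | hs
    · exact ⟨a, by simp, by simp [hrefl]⟩
    · obtain ⟨m, hm, hmax⟩ := ih hs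
      rcases htotal (v m) (v a) with h | h
      · refine ⟨a, by simp, ?_⟩
        intro x hx
        rcases Finset.mem_insert.mp hx with rfl | hx
        · exact hrefl _
        · exact htrans _ _ _ (hmax x hx) h
      · refine ⟨m, by simp [hm], ?_⟩
        intro x hx
        rcases Finset.mem_insert.mp hx with rfl | hx
        · exact h
        · exact hmax x hx

private lemma stmt7_val_sum {A : Type*} [CommRing A] [IsDomain A] {N : ℕ}
    (le : (Fin N → ℤ) → (Fin N → ℤ) → Prop)
    (hrefl : ∀ a, le a a)
    (hantisymm : ∀ a b, le a b → le b a → a = b)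
    (htrans : ∀ a b c, le a b → le b c → le a c)
    (htotal : ∀ a b, le a b ∨ le b a)
    (Ψ : A → (Fin N → ℤ))
    (hΨmul : ∀ f g : A, f ≠ 0 → g ≠ 0 → Ψ (f * g) = Ψ f + Ψ g)
    (hΨadd : ∀ f g : A, f ≠ 0 → g ≠ 0 → f + g ≠ 0 →
      le (Ψ (f + g)) (Ψ f) ∨ le (Ψ (f + g)) (Ψ g))
    {σ : Type*} :
    ∀ (s : Finset σ) (t : σ → A), (∀ x ∈ s, t x ≠ 0) →
      (∀ x ∈ s, ∀ y ∈ s, x ≠ y → Ψ (t x) ≠ Ψ (t y)) →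
      (∑ x ∈ s, t x) ≠ 0 →
      ∃ m ∈ s, Ψ (∑ x ∈ s, t x) = Ψ (t m) := by
  classical
  have hΨ1 : Ψ (1 : A) = 0 := by
    have := hΨmul 1 1 one_ne_zero one_ne_zero
    rw [mul_one] at this
    have h2 : Ψ 1 + Ψ 1 = Ψ 1 + 0 := by rw [add_zero, ← this]
    exact (add_left_cancel h2)
  have hΨneg : ∀ x : A, x ≠ 0 → Ψ (-x) = Ψ x := by
    intro x hx
    have hm1 : Ψ (-1 : A) = 0 := by
      have := hΨmul (-1) (-1) (by simp) (by simp)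
      rw [neg_mul_neg, one_mul, hΨ1] at this
      have : Ψ (-1 : A) + Ψ (-1 : A) = 0 := this.symm
      funext j
      have hj := congrFun this j
      simp only [Pi.add_apply, Pi.zero_apply] at hj ⊢
      omega
    have := hΨmul (-1) x (by simp) hx
    rw [neg_one_mul, hm1, zero_add] at this
    exact this
  intro s
  induction s using Finset.strongInduction with
  | _ s ih =>
    intro t h0 hdist hsum
    have hs : s.Nonempty := by
      rcases s.eq_empty_or_nonempty with rfl | hs
      · simp at hsum
      · exact hs
    obtain ⟨m, hm, hmax⟩ := stmt7_exists_max le hrefl htrans htotal (fun x => Ψ (t x)) s hs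
    have hsum2 : t m + ∑ x ∈ s.erase m, t x = ∑ x ∈ s, t x := Finset.add_sum_erase s t hm
    set S' := ∑ x ∈ s.erase m, t x with hS'def
    by_cases hS' : S' = 0
    · refine ⟨m, hm, ?_⟩
      rw [← hsum2, hS', add_zero]
    · obtain ⟨y, hy, hΨS'⟩ := ih (s.erase m) (Finset.erase_ssubset hm) t
        (fun x hx => h0 x (Finset.mem_of_mem_erase hx))
        (fun x hx z hz hxz => hdist x (Finset.mem_of_mem_erase hx) z (Finset.mem_of_mem_erase hz) hxz)
        hS'
      have hy' : y ∈ s := Finset.mem_of_mem_erase hy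
      have hym : y ≠ m := Finset.ne_of_mem_erase hy
      have hS'le : le (Ψ S') (Ψ (t m)) := by rw [hΨS']; exact hmax y hy'
      have hS'ne : Ψ S' ≠ Ψ (t m) := by rw [hΨS']; exact hdist y hy' m hm hym
      have htm : t m ≠ 0 := h0 m hm
      have h1 : le (Ψ (∑ x ∈ s, t x)) (Ψ (t m)) := by
        rcases hΨadd (t m) S' htm hS' (by rw [hsum2]; exact hsum) with h | h
        · rwa [hsum2] at h
        · rw [hsum2] at h; exact htrans _ _ _ h hS'le
      have h2 : le (Ψ (t m)) (Ψ (∑ x ∈ s, t x)) := by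
        have heq : (∑ x ∈ s, t x) + (-S') = t m := by rw [← hsum2]; ring
        rcases hΨadd (∑ x ∈ s, t x) (-S') hsum (neg_ne_zero.mpr hS') (by rw [heq]; exact htm)
          with h | h
        · rwa [heq] at h
        · rw [heq, hΨneg _ hS'] at h
          exact absurd (hantisymm _ _ hS'le h) hS'ne
      exact ⟨m, hm, hantisymm _ _ h1 h2⟩


/-- for an ℕ-graded commutative `k`-algebra domain `A` with `A₀ = k·1`, a
valuation `Ψ` on `A` with values in `ℤ^N` (equipped with a translation-invariant linear
order `le`), and nonzero homogeneous elements `b₁, …, b_r` of degrees `d₁, …, d_r ≥ 1` with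
`Ψ(b₁), …, Ψ(b_r)` linearly independent over `ℚ`, the Newton–Okounkov body of the subalgebra
generated by the `bᵢ` equals the convex hull of the points `(1/dᵢ)·Ψ(bᵢ)`. -/
theorem stmt7 {k A : Type*} [Field k] [CommRing A] [IsDomain A] [Algebra k A]
    {N : ℕ} (hN : 1 ≤ N)
    (𝒜 : ℕ → Submodule k A) [GradedAlgebra 𝒜]
    (h𝒜0 : 𝒜 0 = Submodule.span k {(1 : A)})
    (le : (Fin N → ℤ) → (Fin N → ℤ) → Prop)
    (hrefl : ∀ a, le a a)
    (hantisymm : ∀ a b, le a b → le b a → a = b)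
    (htrans : ∀ a b c, le a b → le b c → le a c)
    (htotal : ∀ a b, le a b ∨ le b a)
    (haddinv : ∀ a b c, le a b → le (a + c) (b + c))
    (Ψ : A → (Fin N → ℤ))
    (hΨmul : ∀ f g : A, f ≠ 0 → g ≠ 0 → Ψ (f * g) = Ψ f + Ψ g)
    (hΨsmul : ∀ c : k, c ≠ 0 → ∀ f : A, f ≠ 0 → Ψ (c • f) = Ψ f)
    (hΨadd : ∀ f g : A, f ≠ 0 → g ≠ 0 → f + g ≠ 0 →
      le (Ψ (f + g)) (Ψ f) ∨ le (Ψ (f + g)) (Ψ g))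
    (r : ℕ) (b : Fin r → A) (d : Fin r → ℕ)
    (hb0 : ∀ i, b i ≠ 0) (hbdeg : ∀ i, b i ∈ 𝒜 (d i)) (hd : ∀ i, 1 ≤ d i)
    (hindep : LinearIndependent ℚ (fun i : Fin r => fun j : Fin N => ((Ψ (b i) j : ℚ)))) :
    closure (convexHull ℝ (⋃ n : ℕ, ⋃ (_ : 1 ≤ n),
      {y : Fin N → ℝ | ∃ f : A, f ∈ Algebra.adjoin k (Set.range b) ∧ f ∈ 𝒜 n ∧ f ≠ 0 ∧
        y = (n : ℝ)⁻¹ • fun j : Fin N => (Ψ f j : ℝ)})) =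
    convexHull ℝ
      {y : Fin N → ℝ | ∃ i : Fin r, y = ((d i : ℝ))⁻¹ • fun j : Fin N => (Ψ (b i) j : ℝ)} := by
  classical
  set P : Fin r → (Fin N → ℝ) := fun i => ((d i : ℝ))⁻¹ • fun j : Fin N => (Ψ (b i) j : ℝ)
    with hPdef
  have hQ : {y : Fin N → ℝ | ∃ i : Fin r, y = ((d i : ℝ))⁻¹ • fun j : Fin N => (Ψ (b i) j : ℝ)}
      = Set.range P := by
    ext y; simp [hPdef, eq_comm]
  have hΨ1 : Ψ (1 : A) = 0 := by
    have := hΨmul 1 1 one_ne_zero one_ne_zero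
    rw [mul_one] at this
    have h2 : Ψ 1 + Ψ 1 = Ψ 1 + 0 := by rw [add_zero, ← this]
    exact add_left_cancel h2
  have hΨpow : ∀ (x : A), x ≠ 0 → ∀ m : ℕ, Ψ (x ^ m) = m • Ψ x := by
    intro x hx m
    induction m with
    | zero => simp [hΨ1]
    | succ m ihm =>
      rw [pow_succ, hΨmul _ _ (pow_ne_zero m hx) hx, ihm, succ_nsmul]
  have hΨprod : ∀ (s : Finset (Fin r)) (g : Fin r → A), (∀ i, g i ≠ 0) →
      Ψ (∏ i ∈ s, g i) = ∑ i ∈ s, Ψ (g i) := by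
    intro s g hg
    induction s using Finset.induction_on with
    | empty => simp [hΨ1]
    | @insert a s ha ih =>
      rw [Finset.prod_insert ha, Finset.sum_insert ha,
        hΨmul _ _ (hg a) (Finset.prod_ne_zero_iff.mpr fun i _ => hg i), ih]
  -- value of a monomial
  have hΨmono : ∀ α : Fin r →₀ ℕ, Ψ (∏ i, b i ^ α i) = ∑ i, (α i) • Ψ (b i) := by
    intro α
    rw [hΨprod Finset.univ (fun i => b i ^ α i) (fun i => pow_ne_zero _ (hb0 i))]
    exact Finset.sum_congr rfl fun i _ => hΨpow (b i) (hb0 i) (α i)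
  -- the core claim
  have hcore : ∀ (n : ℕ), 1 ≤ n → ∀ f : A, f ∈ Algebra.adjoin k (Set.range b) → f ∈ 𝒜 n →
      f ≠ 0 → ((n : ℝ)⁻¹ • fun j : Fin N => (Ψ f j : ℝ)) ∈ convexHull ℝ (Set.range P) := by
    intro n hn f hfB hfn hf0
    rw [Algebra.adjoin_range_eq_range_aeval] at hfB
    obtain ⟨p, hp⟩ := hfB
    rw [show ((MvPolynomial.aeval b).toRingHom p) = MvPolynomial.aeval b p from rfl] at hp
    -- terms of f
    set t : (Fin r →₀ ℕ) → A := fun α => MvPolynomial.coeff α p • ∏ i, b i ^ α i with htdef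
    set w : (Fin r →₀ ℕ) → ℕ := fun α => ∑ i, α i * d i with hwdef
    have hprodmem : ∀ α : Fin r →₀ ℕ, (∏ i, b i ^ α i) ∈ 𝒜 (w α) := by
      intro α
      have : ∀ s : Finset (Fin r), (∏ i ∈ s, b i ^ α i) ∈ 𝒜 (∑ i ∈ s, α i * d i) := by
        intro s
        induction s using Finset.induction_on with
        | empty => simpa using SetLike.one_mem_graded 𝒜
        | @insert a s ha ih =>
          rw [Finset.prod_insert ha, Finset.sum_insert ha]
          have hpow : b a ^ α a ∈ 𝒜 (α a * d a) := by
            simpa [smul_eq_mul] using SetLike.pow_mem_graded (α a) (hbdeg a)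
          exact SetLike.mul_mem_graded hpow ih
      exact this Finset.univ
    have htmem : ∀ α : Fin r →₀ ℕ, t α ∈ 𝒜 (w α) :=
      fun α => Submodule.smul_mem _ _ (hprodmem α)
    have hsumf : ∑ α ∈ p.support, t α = f := by
      rw [← hp]
      conv_rhs => rw [← MvPolynomial.support_sum_monomial_coeff p]
      rw [map_sum]
      refine Finset.sum_congr rfl fun α _ => ?_
      simp only [MvPolynomial.aeval_monomial, Finsupp.prod_pow, htdef, Algebra.smul_def]
    set T : Finset (Fin r →₀ ℕ) := p.support.filter (fun α => w α = n) with hTdef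
    have hfT : ∑ α ∈ T, t α = f := by
      calc ∑ α ∈ T, t α = ∑ α ∈ p.support, if w α = n then t α else 0 := by
            rw [hTdef, Finset.sum_filter]
        _ = ∑ α ∈ p.support, ((DirectSum.decompose 𝒜 (t α)) n : A) := by
            refine Finset.sum_congr rfl fun α _ => ?_
            split_ifs with h
            · rw [DirectSum.decompose_of_mem_same 𝒜 (h ▸ htmem α)]
            · rw [DirectSum.decompose_of_mem_ne 𝒜 (htmem α) h]
        _ = ((DirectSum.decompose 𝒜 (∑ α ∈ p.support, t α)) n : A) := by
            rw [DirectSum.decompose_sum, DFinsupp.finset_sum_apply,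
              AddSubmonoidClass.coe_finset_sum]
        _ = f := by rw [hsumf, DirectSum.decompose_of_mem_same 𝒜 hfn]
    have ht0 : ∀ α ∈ T, t α ≠ 0 := by
      intro α hα
      have hc : MvPolynomial.coeff α p ≠ 0 :=
        MvPolynomial.mem_support_iff.mp (Finset.mem_filter.mp hα).1
      have hpr : (∏ i, b i ^ α i) ≠ 0 :=
        Finset.prod_ne_zero_iff.mpr fun i _ => pow_ne_zero _ (hb0 i)
      rw [htdef]
      simp only []
      rw [Algebra.smul_def]
      exact mul_ne_zero ((map_ne_zero_iff _ (algebraMap k A).injective).mpr hc) hpr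
    have hΨt : ∀ α ∈ T, Ψ (t α) = ∑ i, (α i) • Ψ (b i) := by
      intro α hα
      have hc : MvPolynomial.coeff α p ≠ 0 :=
        MvPolynomial.mem_support_iff.mp (Finset.mem_filter.mp hα).1
      have hpr : (∏ i, b i ^ α i) ≠ 0 :=
        Finset.prod_ne_zero_iff.mpr fun i _ => pow_ne_zero _ (hb0 i)
      rw [htdef]
      simp only []
      rw [hΨsmul _ hc _ hpr, hΨmono]
    have hdistT : ∀ α ∈ T, ∀ β ∈ T, α ≠ β → Ψ (t α) ≠ Ψ (t β) := by
      intro α hα β hβ hαβ h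
      rw [hΨt α hα, hΨt β hβ] at h
      apply hαβ
      have hgz := Fintype.linearIndependent_iff.mp hindep
        (fun i => (α i : ℚ) - (β i : ℚ))
      have hz : ∀ i, (α i : ℚ) - (β i : ℚ) = 0 := by
        apply hgz
        funext j
        have hj := congrFun h j
        simp only [Finset.sum_apply, Pi.smul_apply, smul_eq_mul, nsmul_eq_mul] at hj
        simp only [Finset.sum_apply, Pi.smul_apply, smul_eq_mul, Pi.zero_apply, sub_mul]
        rw [Finset.sum_sub_distrib]
        have : (∑ i, (α i : ℚ) * (Ψ (b i) j : ℚ)) = ∑ i, (β i : ℚ) * (Ψ (b i) j : ℚ) := by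
          exact_mod_cast congrArg (fun z : ℤ => (z : ℚ)) hj
        rw [this, sub_self]
      ext i
      have := hz i
      exact_mod_cast sub_eq_zero.mp this
    obtain ⟨α, hαT, hΨf⟩ := stmt7_val_sum le hrefl hantisymm htrans htotal Ψ hΨmul hΨadd
      T t ht0 hdistT (by rw [hfT]; exact hf0)
    have hdeg : ∑ i, α i * d i = n := (Finset.mem_filter.mp hαT).2
    have hn0 : (n : ℝ) ≠ 0 := by positivity
    set wt : Fin r → ℝ := fun i => (α i * d i : ℕ) / n with hwtdef
    have hwt0 : ∀ i ∈ Finset.univ, 0 ≤ wt i := fun i _ => by positivity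
    have hwt1 : ∑ i, wt i = 1 := by
      rw [hwtdef]
      rw [← Finset.sum_div]
      rw [div_eq_one_iff_eq hn0]
      exact_mod_cast congrArg (Nat.cast : ℕ → ℝ) hdeg
    have hmem := Finset.centerMass_mem_convexHull Finset.univ hwt0
      (by rw [hwt1]; exact one_pos) (fun i _ => Set.mem_range_self i (f := P))
    rw [Finset.centerMass_eq_of_sum_1 _ _ hwt1] at hmem
    have hΨfval : Ψ f = ∑ i, (α i) • Ψ (b i) := by rw [← hfT, hΨf, hΨt α hαT]
    have heq : ((n : ℝ)⁻¹ • fun j : Fin N => (Ψ f j : ℝ)) = ∑ i, wt i • P i := by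
      funext j
      have hj : Ψ f j = ∑ i, (α i : ℤ) * Ψ (b i) j := by
        rw [hΨfval]
        simp [Finset.sum_apply]
      simp only [Pi.smul_apply, smul_eq_mul, Finset.sum_apply, hPdef, hwtdef]
      rw [hj]
      push_cast
      rw [Finset.mul_sum]
      refine Finset.sum_congr rfl fun i _ => ?_
      have hdi : (d i : ℝ) ≠ 0 := by
        have := hd i; positivity
      field_simp
    rw [heq]
    exact hmem
  -- now the two inclusions
  rw [hQ]
  apply subset_antisymm
  · apply closure_minimal
    · apply convexHull_min _ (convex_convexHull ℝ _)
      intro y hy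
      simp only [Set.mem_iUnion, Set.mem_setOf_eq] at hy
      obtain ⟨n, hn, f, hfB, hfn, hf0, rfl⟩ := hy
      exact hcore n hn f hfB hfn hf0
    · exact ((Set.finite_range P).isCompact_convexHull (𝕜 := ℝ)).isClosed
  · apply convexHull_min _ ((convex_convexHull ℝ _).closure)
    rintro y ⟨i, rfl⟩
    apply subset_closure
    apply subset_convexHull
    simp only [Set.mem_iUnion, Set.mem_setOf_eq]
    exact ⟨d i, hd i, b i, Algebra.subset_adjoin ⟨i, rfl⟩, hbdeg i, hb0 i, by rw [hPdef]⟩
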